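/- For a traceless Hermitian operator H, the operator norm satisfies ‖H‖_∞ ≤ ‖H‖₁/2. -/

import Mathlib

open Matrix ComplexOrder

/-- The trace norm `‖A‖₁ = Tr √(AᴴA)` of a complex matrix. -/
noncomputable def traceNorm {d : ℕ} (A : Matrix (Fin d) (Fin d) ℂ) : ℝ :=
  (((Matrix.posSemidef_conjTranspose_mul_self A).1.eigenvectorUnitary : Matrix (Fin d) (Fin d) ℂ) *
    diagonal (((↑) : ℝ → ℂ) ∘ (√·) ∘ (Matrix.posSemidef_conjTranspose_mul_self A).1.eigenvalues) *
    (star (Matrix.posSemidef_conjTranspose_mul_self A).1.eigenvectorUnitary :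
      Matrix (Fin d) (Fin d) ℂ)).trace.re

/-- The operator (spectral) norm `‖A‖_∞` of a complex matrix. -/
noncomputable def opNorm {d : ℕ} (A : Matrix (Fin d) (Fin d) ℂ) : ℝ :=
  ‖Matrix.toEuclideanCLM (𝕜 := ℂ) A‖

lemma abs_le_half_sum_abs {d : ℕ} (f : Fin d → ℝ) (hf : ∑ i, f i = 0) (i : Fin d) :
    |f i| ≤ (∑ j, |f j|) / 2 := by
  rw [le_div_iff₀ (by norm_num)]
  rw [show |f i| * 2 = |f i| + |f i| by ring]
  have h1 : f i = -∑ j ∈ Finset.univ.erase i, f j := by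
    rw [eq_neg_iff_add_eq_zero, add_comm, Finset.sum_erase_add _ _ (Finset.mem_univ i)]
    exact hf
  calc (|f i| + |f i| : ℝ) = |f i| + |∑ j ∈ Finset.univ.erase i, f j| := by rw [h1, abs_neg]
    _ ≤ |f i| + ∑ j ∈ Finset.univ.erase i, |f j| :=
        add_le_add le_rfl (Finset.abs_sum_le_sum_abs _ _)
    _ = ∑ j, |f j| := by rw [add_comm, Finset.sum_erase_add _ _ (Finset.mem_univ i)]

lemma traceNorm_eq_sum_abs_eigenvalues {d : ℕ} (H : Matrix (Fin d) (Fin d) ℂ)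
    (hH : H.IsHermitian) :
    traceNorm H = ∑ i, |hH.eigenvalues i| := by
  have hHH : (Hᴴ * H).IsHermitian := (Matrix.posSemidef_conjTranspose_mul_self H).1
  have e1 : traceNorm H = (cfc Real.sqrt (Hᴴ * H)).trace.re := by
    rw [hHH.cfc_eq]; rfl
  rw [e1, hH.eq, ← pow_two, ← cfc_comp_pow Real.sqrt 2 H (ha := hH.isSelfAdjoint), hH.cfc_eq,
    Matrix.IsHermitian.cfc, Unitary.conjStarAlgAut_apply, Matrix.trace_mul_cycle,
    Unitary.coe_star_mul_self, one_mul, Matrix.trace_diagonal, Complex.re_sum]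
  simp [Real.sqrt_sq_eq_abs]

lemma opNorm_le_of_abs_eigenvalues_le {d : ℕ} (H : Matrix (Fin d) (Fin d) ℂ)
    (hH : H.IsHermitian) (c : ℝ) (hc : 0 ≤ c)
    (h : ∀ i, |hH.eigenvalues i| ≤ c) : opNorm H ≤ c := by
  have hsa : _root_.IsSelfAdjoint (Matrix.toEuclideanCLM (𝕜 := ℂ) H) := by
    rw [_root_.IsSelfAdjoint, ← map_star]
    exact congrArg _ hH.eq
  have hspec : spectrum ℂ (Matrix.toEuclideanCLM (𝕜 := ℂ) H)
      = Set.range (fun i => (hH.eigenvalues i : ℂ)) := by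
    rw [AlgEquiv.spectrum_eq (Matrix.toEuclideanCLM (𝕜 := ℂ) (n := Fin d)) H]
    conv_lhs => rw [hH.spectral_theorem, Unitary.conjStarAlgAut_apply, Unitary.spectrum_star_right_conjugate, spectrum_diagonal]
    rfl
  have hrad := hsa.spectralRadius_eq_nnnorm
  have hle : spectralRadius ℂ (Matrix.toEuclideanCLM (𝕜 := ℂ) H) ≤ ENNReal.ofReal c := by
    rw [spectralRadius]
    refine iSup₂_le fun k hk => ?_
    rw [hspec] at hk
    obtain ⟨i, rfl⟩ := hk
    rw [← enorm_eq_nnnorm, ← ofReal_norm]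
    refine ENNReal.ofReal_le_ofReal ?_
    simpa [Complex.norm_real] using h i
  rw [hrad, ← enorm_eq_nnnorm, ← ofReal_norm] at hle
  rw [opNorm]
  exact (ENNReal.ofReal_le_ofReal_iff hc).mp hle

/-- For a traceless Hermitian operator `H`, `‖H‖_∞ ≤ ‖H‖₁ / 2`. -/
theorem opNorm_le_half_traceNorm {d : ℕ}
    (H : Matrix (Fin d) (Fin d) ℂ)
    (hHerm : Hᴴ = H) (htr : H.trace = 0) :
    opNorm H ≤ traceNorm H / 2 := by
  have hH : H.IsHermitian := hHerm
  have htrsum : ∑ i, hH.eigenvalues i = 0 := by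
    have h1 : H.trace = ∑ i, (hH.eigenvalues i : ℂ) := by
      conv_lhs => rw [hH.spectral_theorem]
      rw [Unitary.conjStarAlgAut_apply, Matrix.trace_mul_cycle]
      simp [Matrix.trace_diagonal, Unitary.coe_star_mul_self hH.eigenvectorUnitary]
    rw [htr] at h1
    exact_mod_cast h1.symm
  have hTN := traceNorm_eq_sum_abs_eigenvalues H hH
  have hc : (0:ℝ) ≤ traceNorm H / 2 := by
    rw [hTN]
    positivity
  refine opNorm_le_of_abs_eigenvalues_le H hH _ hc fun i => ?_
  rw [hTN]
  exact abs_le_half_sum_abs _ htrsum i
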